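/- Let U be a real interval, let f and f_n (n ∈ ℕ) be continuous, strictly monotone real functions on U, and suppose that B_{f_n}(x,y,z) → B_f(x,y,z) as n → ∞ for every (x,y,z) ∈ U³ with x ≠ z. Then for every n-tuple a ∈ Uⁿ and every weight vector w (with w_i > 0, ∑ w_i = 1), M_{f_n}(a,w) → M_f(a,w) as n → ∞. -/

import Mathlib

open Filter Finset

private lemma norm_strictMono {U : Set ℝ} {h : ℝ → ℝ}
    (hm : StrictMonoOn h U ∨ StrictAntiOn h U)
    {p q : ℝ} (hp : p ∈ U) (hq : q ∈ U) (hpq : p < q) :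
    StrictMonoOn (fun x => (h x - h p) / (h q - h p)) U := by
  intro x hx y hy hxy
  rcases hm with hm | hm
  · have hd : 0 < h q - h p := sub_pos.2 (hm hp hq hpq)
    exact (div_lt_div_iff_of_pos_right hd).2 (sub_lt_sub_right (hm hx hy hxy) _)
  · have hd : h q - h p < 0 := sub_neg.2 (hm hp hq hpq)
    exact (div_lt_div_right_of_neg hd).2 (sub_lt_sub_right (hm hx hy hxy) _)

private lemma norm_sum {m : ℕ} (w : Fin m → ℝ) (hw1 : ∑ i, w i = 1)
    (x : Fin m → ℝ) (c d : ℝ) :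
    ∑ i, w i * ((x i - c) / d) = ((∑ i, w i * x i) - c) / d := by
  simp only [← mul_div_assoc, ← Finset.sum_div]
  congr 1
  simp only [mul_sub, Finset.sum_sub_distrib, ← Finset.sum_mul, hw1, one_mul]

/-- **Corollary (pointwise convergence).** If `B_{f_n} → B_f` pointwise on `Δ`,
then `M_{f_n}(a,w) → M_f(a,w)` for every fixed `a` and `w`. -/
theorem stmt_2 (U : Set ℝ) (hU : U.OrdConnected)
    (f : ℝ → ℝ) (F : ℕ → ℝ → ℝ)
    (hfc : ContinuousOn f U) (hfm : StrictMonoOn f U ∨ StrictAntiOn f U)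
    (hFc : ∀ n, ContinuousOn (F n) U)
    (hFm : ∀ n, StrictMonoOn (F n) U ∨ StrictAntiOn (F n) U)
    (hB : ∀ x ∈ U, ∀ y ∈ U, ∀ z ∈ U, x ≠ z →
      Filter.Tendsto (fun n => (F n x - F n y) / (F n x - F n z)) Filter.atTop
        (nhds ((f x - f y) / (f x - f z))))
    (m : ℕ) (a : Fin m → ℝ) (ha : ∀ i, a i ∈ U)
    (w : Fin m → ℝ) (hw : ∀ i, 0 < w i) (hw1 : ∑ i, w i = 1)
    (Mf : ℝ) (hMf : Mf ∈ U) (hMfe : f Mf = ∑ i, w i * f (a i))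
    (MF : ℕ → ℝ) (hMF : ∀ n, MF n ∈ U)
    (hMFe : ∀ n, F n (MF n) = ∑ i, w i * F n (a i)) :
    Filter.Tendsto MF Filter.atTop (nhds Mf) := by
  have hne : (Finset.univ : Finset (Fin m)).Nonempty := by
    by_contra h
    rw [Finset.not_nonempty_iff_eq_empty] at h
    rw [h] at hw1
    simp at hw1
  obtain ⟨i0, -, hi0⟩ := Finset.exists_min_image Finset.univ a hne
  obtain ⟨i1, -, hi1⟩ := Finset.exists_max_image Finset.univ a hne
  set p := a i0 with hp_def
  set q := a i1 with hq_def
  have hpU : p ∈ U := ha i0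
  have hqU : q ∈ U := ha i1
  have hinjf : Set.InjOn f U := hfm.elim StrictMonoOn.injOn StrictAntiOn.injOn
  have hinjF : ∀ n, Set.InjOn (F n) U :=
    fun n => (hFm n).elim StrictMonoOn.injOn StrictAntiOn.injOn
  by_cases hpq : p = q
  · -- all `a i` are equal, so all means equal `p`
    have haeq : ∀ i, a i = p :=
      fun i => le_antisymm (hpq ▸ hi1 i (Finset.mem_univ i)) (hi0 i (Finset.mem_univ i))
    have hsum : ∀ h : ℝ → ℝ, ∑ i, w i * h (a i) = h p := by
      intro h
      rw [Finset.sum_congr rfl fun i _ => by rw [haeq i], ← Finset.sum_mul, hw1, one_mul]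
    have hMfp : Mf = p := hinjf hMf hpU (by rw [hMfe, hsum])
    have hMFp : ∀ n, MF n = p := fun n => hinjF n (hMF n) hpU (by rw [hMFe, hsum])
    simp only [hMfp]
    exact tendsto_const_nhds.congr fun n => (hMFp n).symm
  · have hplt : p < q := lt_of_le_of_ne (hi0 i1 (Finset.mem_univ i1)) hpq
    set g : ℝ → ℝ := fun x => (f x - f p) / (f q - f p) with hg_def
    set G : ℕ → ℝ → ℝ := fun n x => (F n x - F n p) / (F n q - F n p) with hG_def
    have hd : f q - f p ≠ 0 := sub_ne_zero.2 fun h => hpq (hinjf hqU hpU h).symm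
    have hD : ∀ n, F n q - F n p ≠ 0 :=
      fun n => sub_ne_zero.2 fun h => hpq (hinjF n hqU hpU h).symm
    have gmono : StrictMonoOn g U := norm_strictMono hfm hpU hqU hplt
    have Gmono : ∀ n, StrictMonoOn (G n) U := fun n => norm_strictMono (hFm n) hpU hqU hplt
    have hgp : g p = 0 := by simp [hg_def]
    have hgq : g q = 1 := by simp [hg_def, div_self hd]
    -- pointwise convergence of the normalized functions
    have hGconv : ∀ x ∈ U, Tendsto (fun n => G n x) atTop (nhds (g x)) := by
      intro x hx
      have h1 := hB q hqU x hx p hpU hplt.ne'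
      have h2 : Tendsto (fun n => 1 - (F n q - F n x) / (F n q - F n p)) atTop
          (nhds (1 - (f q - f x) / (f q - f p))) := tendsto_const_nhds.sub h1
      have heq : ∀ n, G n x = 1 - (F n q - F n x) / (F n q - F n p) := by
        intro n
        simp only [hG_def]
        rw [eq_sub_iff_add_eq, ← add_div,
          show F n x - F n p + (F n q - F n x) = F n q - F n p by ring, div_self (hD n)]
      have heq' : g x = 1 - (f q - f x) / (f q - f p) := by
        simp only [hg_def]
        rw [eq_sub_iff_add_eq, ← add_div,
          show f x - f p + (f q - f x) = f q - f p by ring, div_self hd]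
      rw [heq']
      exact h2.congr fun n => (heq n).symm
    -- the normalized mean identities
    have hgM : g Mf = ∑ i, w i * g (a i) := by
      simp only [hg_def]
      rw [norm_sum w hw1 (fun i => f (a i)) (f p) (f q - f p), ← hMfe]
    have hGM : ∀ n, G n (MF n) = ∑ i, w i * G n (a i) := by
      intro n
      simp only [hG_def]
      rw [norm_sum w hw1 (fun i => F n (a i)) (F n p) (F n q - F n p), ← hMFe n]
    -- convergence of `G n (MF n)` to `g Mf`
    have hGMconv : Tendsto (fun n => G n (MF n)) atTop (nhds (g Mf)) := by
      rw [hgM]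
      have : Tendsto (fun n => ∑ i, w i * G n (a i)) atTop (nhds (∑ i, w i * g (a i))) :=
        tendsto_finset_sum _ fun i _ => tendsto_const_nhds.mul (hGconv (a i) (ha i))
      exact this.congr fun n => (hGM n).symm
    -- bounds: `0 ≤ g (a i) ≤ 1` and strict position of `Mf`
    have hga_mem : ∀ i, 0 ≤ g (a i) ∧ g (a i) ≤ 1 := by
      intro i
      constructor
      · rw [← hgp]; exact gmono.monotoneOn hpU (ha i) (hi0 i (Finset.mem_univ i))
      · rw [← hgq]; exact gmono.monotoneOn (ha i) hqU (hi1 i (Finset.mem_univ i))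
    have hgMpos : 0 < g Mf := by
      rw [hgM]
      calc (0:ℝ) < w i1 * g (a i1) := by
            rw [← hq_def, hgq, mul_one]; exact hw i1
        _ ≤ ∑ i, w i * g (a i) :=
            Finset.single_le_sum
              (fun i _ => mul_nonneg (hw i).le (hga_mem i).1) (Finset.mem_univ i1)
    have hgMlt : g Mf < 1 := by
      have key : ∑ i, w i * (1 - g (a i)) = 1 - g Mf := by
        simp only [mul_sub, mul_one, Finset.sum_sub_distrib, hw1, hgM]
      have : (0:ℝ) < 1 - g Mf := by
        rw [← key]
        calc (0:ℝ) < w i0 * (1 - g (a i0)) := by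
              rw [← hp_def, hgp, sub_zero, mul_one]; exact hw i0
          _ ≤ ∑ i, w i * (1 - g (a i)) :=
              Finset.single_le_sum
                (fun i _ => mul_nonneg (hw i).le (sub_nonneg.2 (hga_mem i).2))
                (Finset.mem_univ i0)
      linarith
    have hpMf : p < Mf := by
      by_contra hle
      push_neg at hle
      have : g Mf ≤ g p := gmono.monotoneOn hMf hpU hle
      rw [hgp] at this; linarith
    have hMfq : Mf < q := by
      by_contra hle
      push_neg at hle
      have : g q ≤ g Mf := gmono.monotoneOn hqU hMf hle
      rw [hgq] at this; linarith
    -- conclude via the order characterization of convergence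
    rw [tendsto_order]
    constructor
    · intro u hu
      have hu' : max u p < Mf := max_lt hu hpMf
      have hu'U : max u p ∈ U := hU.out hpU hMf ⟨le_max_right _ _, hu'.le⟩
      have hlt : g (max u p) < g Mf := gmono hu'U hMf hu'
      filter_upwards [(hGconv _ hu'U).eventually_lt hGMconv hlt] with n hn
      have : max u p < MF n := by
        by_contra hle
        push_neg at hle
        exact absurd hn (not_lt.2 ((Gmono n).monotoneOn (hMF n) hu'U hle))
      exact lt_of_le_of_lt (le_max_left u p) this
    · intro v hv
      have hv' : Mf < min v q := lt_min hv hMfq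
      have hv'U : min v q ∈ U := hU.out hMf hqU ⟨hv'.le, min_le_right _ _⟩
      have hlt : g Mf < g (min v q) := gmono hMf hv'U hv'
      filter_upwards [hGMconv.eventually_lt (hGconv _ hv'U) hlt] with n hn
      have : MF n < min v q := by
        by_contra hle
        push_neg at hle
        exact absurd hn (not_lt.2 ((Gmono n).monotoneOn hv'U (hMF n) hle))
      exact lt_of_lt_of_le this (min_le_left v q)
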